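/- Let 0 < a < 1 be a real number. Then (1 − a)·(1/a + π²/6 − 1) < ψ(1) − ψ(a) < (1 − a)·(1/a + 1). -/

import Mathlib

open scoped Real

open Filter Finset Topology

/-- The digamma function `ψ(x) = Γ'(x)/Γ(x)`. -/
noncomputable def digamma (x : ℝ) : ℝ := deriv Real.Gamma x / Real.Gamma x

private lemma gamma_ne_neg_nat {x : ℝ} (hx : 0 < x) : ∀ m : ℕ, x ≠ -m := fun m =>
  ne_of_gt (lt_of_le_of_lt (neg_nonpos.mpr m.cast_nonneg) hx)

private lemma digamma_hasDerivAt_logGamma {x : ℝ} (hx : 0 < x) :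
    HasDerivAt (Real.log ∘ Real.Gamma) (digamma x) x := by
  have hd : HasDerivAt Real.Gamma (deriv Real.Gamma x) x :=
    (Real.differentiableAt_Gamma (gamma_ne_neg_nat hx)).hasDerivAt
  exact hd.log (Real.Gamma_pos_of_pos hx).ne'

private lemma digamma_rec {x : ℝ} (hx : 0 < x) : digamma (x + 1) = digamma x + 1 / x := by
  have hd : HasDerivAt Real.Gamma (deriv Real.Gamma x) x :=
    (Real.differentiableAt_Gamma (gamma_ne_neg_nat hx)).hasDerivAt
  have hd1 : HasDerivAt Real.Gamma (deriv Real.Gamma (x + 1)) (x + 1) :=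
    (Real.differentiableAt_Gamma (gamma_ne_neg_nat (by linarith))).hasDerivAt
  have h2 : HasDerivAt (fun y => Real.Gamma (y + 1)) (deriv Real.Gamma (x + 1)) x := by
    have := hd1.comp x ((hasDerivAt_id x).add_const 1)
    simp only [mul_one] at this
    exact this
  have h3 : HasDerivAt (fun y => y * Real.Gamma y)
      (1 * Real.Gamma x + x * deriv Real.Gamma x) x := (hasDerivAt_id x).mul hd
  have heq : (fun y => y * Real.Gamma y) =ᶠ[nhds x] (fun y => Real.Gamma (y + 1)) := by
    filter_upwards [eventually_gt_nhds hx] with y hy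
    exact (Real.Gamma_add_one hy.ne').symm
  have h3' : HasDerivAt (fun y => Real.Gamma (y + 1))
      (1 * Real.Gamma x + x * deriv Real.Gamma x) x :=
    h3.congr_of_eventuallyEq heq.symm
  have hkey : deriv Real.Gamma (x + 1) = Real.Gamma x + x * deriv Real.Gamma x := by
    have := h2.unique h3'
    linarith
  have hG : Real.Gamma x ≠ 0 := (Real.Gamma_pos_of_pos hx).ne'
  unfold digamma
  rw [hkey, Real.Gamma_add_one hx.ne']
  field_simp
  ring

private lemma digamma_add_nat {a : ℝ} (ha : 0 < a) (n : ℕ) :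
    digamma (a + n) = digamma a + ∑ k ∈ range n, 1 / (a + k) := by
  induction n with
  | zero => simp
  | succ n ih =>
    have h1 : a + ((n : ℝ) + 1) = (a + n) + 1 := by ring
    have h2 : (0 : ℝ) < a + n := by positivity
    rw [Nat.cast_succ, h1, digamma_rec h2, ih, sum_range_succ]
    ring

private lemma digamma_mono {x y : ℝ} (hx : 0 < x) (hxy : x ≤ y) : digamma x ≤ digamma y := by
  rcases eq_or_lt_of_le hxy with rfl | hlt
  · exact le_refl _
  · have hy : 0 < y := lt_trans hx hlt
    have hfx := digamma_hasDerivAt_logGamma hx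
    have hfy := digamma_hasDerivAt_logGamma hy
    have hc := Real.convexOn_log_Gamma
    have h1 : digamma x ≤ slope (Real.log ∘ Real.Gamma) x y := by
      have := hc.deriv_le_slope (Set.mem_Ioi.mpr hx) (Set.mem_Ioi.mpr hy) hlt
        hfx.differentiableAt
      rwa [hfx.deriv] at this
    have h2 : slope (Real.log ∘ Real.Gamma) x y ≤ digamma y := by
      have := hc.slope_le_deriv (Set.mem_Ioi.mpr hx) (Set.mem_Ioi.mpr hy) hlt
        hfy.differentiableAt
      rwa [hfy.deriv] at this
    linarith

private lemma telescope_hasSum : HasSum (fun k : ℕ => 1 / (((k : ℝ) + 1) * ((k : ℝ) + 2))) 1 := by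
  have hnn : ∀ k : ℕ, 0 ≤ 1 / (((k : ℝ) + 1) * ((k : ℝ) + 2)) := fun k => by positivity
  rw [hasSum_iff_tendsto_nat_of_nonneg hnn]
  have hps : ∀ n : ℕ, ∑ k ∈ range n, 1 / (((k : ℝ) + 1) * ((k : ℝ) + 2))
      = 1 - 1 / ((n : ℝ) + 1) := by
    intro n
    induction n with
    | zero => simp
    | succ n ih =>
      rw [sum_range_succ, ih]
      have h1 : ((n : ℝ) + 1) ≠ 0 := by positivity
      have h2 : ((n : ℝ) + 2) ≠ 0 := by positivity
      push_cast
      field_simp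
      ring
  simp only [hps]
  have : Tendsto (fun n : ℕ => 1 / ((n : ℝ) + 1)) atTop (𝓝 0) :=
    tendsto_one_div_add_atTop_nhds_zero_nat
  simpa using (tendsto_const_nhds (x := (1:ℝ))).sub this

theorem stmt18 (a : ℝ) (ha0 : 0 < a) (ha1 : a < 1) :
    (1 - a) * (1/a + π^2/6 - 1) < digamma 1 - digamma a ∧
    digamma 1 - digamma a < (1 - a) * (1/a + 1) := by
  set D := digamma 1 - digamma a with hD
  set term : ℕ → ℝ := fun k => 1 / (a + k) - 1 / (1 + k) with hterm
  -- partial sums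
  have hS : ∀ n : ℕ, D - ∑ k ∈ range n, term k = digamma (1 + n) - digamma (a + n) := by
    intro n
    have h1 := digamma_add_nat (by norm_num : (0:ℝ) < 1) n
    have h2 := digamma_add_nat ha0 n
    rw [hterm, Finset.sum_sub_distrib, hD, h1, h2]
    ring
  have htail0 : ∀ n : ℕ, 0 ≤ digamma (1 + n) - digamma (a + n) := by
    intro n
    have : digamma (a + n) ≤ digamma (1 + n) :=
      digamma_mono (by positivity) (by linarith)
    linarith
  have htail1 : ∀ n : ℕ, 1 ≤ n → digamma (1 + n) - digamma (a + n) ≤ 1 / n := by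
    intro n hn
    have hnpos : (0:ℝ) < n := by exact_mod_cast hn
    have h1 : digamma ((n : ℝ) + 1) = digamma n + 1 / n := digamma_rec hnpos
    have h2 : digamma (n : ℝ) ≤ digamma (a + n) := digamma_mono hnpos (by linarith)
    have h3 : (1 : ℝ) + n = (n : ℝ) + 1 := by ring
    rw [h3, h1]
    linarith
  -- partial sums tend to D
  have hto : Tendsto (fun n : ℕ => ∑ k ∈ range n, term k) atTop (𝓝 D) := by
    have hsq : Tendsto (fun n : ℕ => digamma (1 + n) - digamma (a + n)) atTop (𝓝 0) := by
      have hbig : Tendsto (fun n : ℕ => 1 / (n : ℝ)) atTop (𝓝 0) :=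
        tendsto_one_div_atTop_nhds_zero_nat
      refine squeeze_zero' ?_ ?_ hbig
      · exact Eventually.of_forall htail0
      · filter_upwards [eventually_ge_atTop 1] with n hn using htail1 n hn
    have heq : (fun n : ℕ => ∑ k ∈ range n, term k)
        = fun n : ℕ => D - (digamma (1 + n) - digamma (a + n)) := by
      funext n; have := hS n; linarith
    rw [heq]
    simpa using (tendsto_const_nhds (x := D)).sub hsq
  have hnonneg : ∀ k : ℕ, 0 ≤ term k := by
    intro k
    have h1 : (0:ℝ) < a + k := by positivity
    have : (1:ℝ) / (1 + k) ≤ 1 / (a + k) :=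
      one_div_le_one_div_of_le h1 (by linarith)
    simp only [hterm]
    linarith
  have hDsum : HasSum term D := (hasSum_iff_tendsto_nat_of_nonneg hnonneg D).mpr hto
  have hterm0 : term 0 = (1 - a) / a := by
    simp only [hterm]
    push_cast
    field_simp
    ring
  -- shifted series
  have hT : HasSum (fun n : ℕ => term (n + 1)) (D - (1 - a) / a) := by
    rw [hasSum_nat_add_iff 1]
    have : D - (1 - a) / a + ∑ i ∈ range 1, term i = D := by
      rw [Finset.sum_range_one, hterm0]; ring
    rw [this]
    exact hDsum
  have ha' : (0:ℝ) < 1 - a := by linarith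
  -- terms of the shifted series, explicitly
  have htermk : ∀ k : ℕ, term (k + 1) = 1 / (a + ((k : ℝ) + 1)) - 1 / ((k : ℝ) + 2) := by
    intro k
    simp only [hterm]
    push_cast
    ring_nf
  -- lower comparison sum
  have hlow_sum : HasSum (fun k : ℕ => (1 - a) * (1 / ((k : ℝ) + 2) ^ 2))
      ((1 - a) * (π ^ 2 / 6 - 1)) := by
    have hb := hasSum_zeta_two.mul_left (1 - a)
    have hb2 : HasSum (fun n : ℕ => (1 - a) * ((1:ℝ) / (n : ℝ) ^ 2))
        ((1 - a) * (π ^ 2 / 6 - 1) + ∑ i ∈ range 2, (1 - a) * ((1:ℝ) / (i : ℝ) ^ 2)) := by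
      have e : (1 - a) * (π ^ 2 / 6 - 1) + ∑ i ∈ range 2, (1 - a) * ((1:ℝ) / (i : ℝ) ^ 2)
          = (1 - a) * (π ^ 2 / 6) := by
        rw [Finset.sum_range_succ, Finset.sum_range_one]
        norm_num
        ring
      rw [e]; exact hb
    have h2 := (hasSum_nat_add_iff
      (f := fun n : ℕ => (1 - a) * ((1:ℝ) / (n : ℝ) ^ 2)) 2).mpr hb2
    have heq : (fun n : ℕ => (1 - a) * ((1:ℝ) / ((n + 2 : ℕ) : ℝ) ^ 2))
        = fun k : ℕ => (1 - a) * (1 / ((k : ℝ) + 2) ^ 2) := by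
      funext k; push_cast; ring
    rwa [heq] at h2
  -- upper comparison sum
  have hup_sum : HasSum (fun k : ℕ => (1 - a) * (1 / (((k : ℝ) + 1) * ((k : ℝ) + 2))))
      ((1 - a) * 1) := telescope_hasSum.mul_left (1 - a)
  -- pointwise comparisons
  have hlow_le : ∀ k : ℕ, (1 - a) * (1 / ((k : ℝ) + 2) ^ 2) ≤ term (k + 1) := by
    intro k
    rw [htermk k]
    have h1 : (0:ℝ) < a + ((k : ℝ) + 1) := by positivity
    have h2 : (0:ℝ) < (k : ℝ) + 2 := by positivity
    have key : 1 / (a + ((k : ℝ) + 1)) - 1 / ((k : ℝ) + 2)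
        = (1 - a) * (1 / ((a + ((k : ℝ) + 1)) * ((k : ℝ) + 2))) := by
      field_simp
      ring
    rw [key]
    have hden : (a + ((k : ℝ) + 1)) * ((k : ℝ) + 2) ≤ ((k : ℝ) + 2) ^ 2 := by
      nlinarith [mul_nonneg h2.le ha'.le]
    gcongr
  have hlow_lt : (1 - a) * (1 / (((0 : ℕ) : ℝ) + 2) ^ 2) < term (0 + 1) := by
    rw [htermk 0]
    have key : 1 / (a + ((0:ℕ) + 1 : ℝ)) - 1 / (((0:ℕ) : ℝ) + 2)
        = (1 - a) / (2 * (a + 1)) := by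
      push_cast
      rw [div_sub_div _ _ (by positivity) (by norm_num),
        div_eq_div_iff (by positivity) (by positivity)]
      ring
    rw [key, show (1 - a) * (1 / (((0 : ℕ) : ℝ) + 2) ^ 2) = (1 - a) / 4 by push_cast; ring]
    apply div_lt_div_of_pos_left ha' (by positivity) (by linarith)
  have hup_le : ∀ k : ℕ, term (k + 1) ≤ (1 - a) * (1 / (((k : ℝ) + 1) * ((k : ℝ) + 2))) := by
    intro k
    rw [htermk k]
    have h1 : (0:ℝ) < a + ((k : ℝ) + 1) := by positivity
    have h2 : (0:ℝ) < (k : ℝ) + 2 := by positivity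
    have key : 1 / (a + ((k : ℝ) + 1)) - 1 / ((k : ℝ) + 2)
        = (1 - a) * (1 / ((a + ((k : ℝ) + 1)) * ((k : ℝ) + 2))) := by
      field_simp
      ring
    rw [key]
    have hden : ((k : ℝ) + 1) * ((k : ℝ) + 2) ≤ (a + ((k : ℝ) + 1)) * ((k : ℝ) + 2) := by
      nlinarith [mul_nonneg h2.le ha0.le]
    gcongr
  have hup_lt : term (0 + 1) < (1 - a) * (1 / ((((0:ℕ) : ℝ) + 1) * (((0:ℕ) : ℝ) + 2))) := by
    rw [htermk 0]
    have key : 1 / (a + ((0:ℕ) + 1 : ℝ)) - 1 / (((0:ℕ) : ℝ) + 2)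
        = (1 - a) / (2 * (a + 1)) := by
      push_cast
      rw [div_sub_div _ _ (by positivity) (by norm_num),
        div_eq_div_iff (by positivity) (by positivity)]
      ring
    rw [key, show (1 - a) * (1 / ((((0:ℕ) : ℝ) + 1) * (((0:ℕ) : ℝ) + 2))) = (1 - a) / 2 by push_cast; ring]
    apply div_lt_div_of_pos_left ha' (by norm_num) (by linarith)
  -- conclude
  have hlow : (1 - a) * (π ^ 2 / 6 - 1) < D - (1 - a) / a := by
    have h := Summable.tsum_lt_tsum_of_nonneg (i := 0)
      (fun k => by positivity) hlow_le hlow_lt hT.summable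
    rwa [hlow_sum.tsum_eq, hT.tsum_eq] at h
  have hup : D - (1 - a) / a < (1 - a) * 1 := by
    have h := Summable.tsum_lt_tsum_of_nonneg (i := 0)
      (fun k => hnonneg (k + 1)) hup_le hup_lt hup_sum.summable
    rwa [hT.tsum_eq, hup_sum.tsum_eq] at h
  constructor
  · have : (1 - a) * (1/a + π^2/6 - 1) = (1 - a) / a + (1 - a) * (π ^ 2 / 6 - 1) := by
      field_simp
      ring
    rw [this]
    linarith
  · have : (1 - a) * (1/a + 1) = (1 - a) / a + (1 - a) * 1 := by
      field_simp
    rw [this]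
    linarith
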